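/- For the class I₅ deformation on the upper half-plane, the deformed vector fields X_{z,1} = ∂/∂x, X_{z,2} = x·cosh(z/y²)∂/∂x + (y/2)·shc(z/y²)∂/∂y, X_{z,3} = x²·cosh(z/y²)∂/∂x + xy·shc(z/y²)∂/∂y are the Hamiltonian vector fields (relative to ω = y^{-3}dx∧dy) of the deformed Hamiltonians h_{z,1} = -1/(2y²), h_{z,2} = -(x/(2y²))·shc(z/y²), h_{z,3} = -(x²/(2y²))·shc(z/y²); that is, ι_{X_{z,i}}ω = dh_{z,i} for i = 1,2,3. -/

import Mathlib

/-- The cardinal hyperbolic sine function. -/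
noncomputable def shc (ξ : ℝ) : ℝ := if ξ = 0 then 1 else Real.sinh ξ / ξ

lemma shc_key_deriv (z c : ℝ) {y : ℝ} (hy : 0 < y) :
    deriv (fun y' => -(c / (2 * y' ^ 2)) * shc (z / y' ^ 2)) y
      = c * Real.cosh (z / y ^ 2) / y ^ 3 := by
  have hy0 : y ≠ 0 := hy.ne'
  have hp : HasDerivAt (fun y' : ℝ => y' ^ 2) (2 * y) y := by
    simpa using hasDerivAt_pow 2 y
  rcases eq_or_ne z 0 with hz | hz
  · subst hz
    have h1 : (fun y' : ℝ => -(c / (2 * y' ^ 2)) * shc (0 / y' ^ 2))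
        = fun y' => -(c / 2) * (y' ^ 2)⁻¹ := by
      funext y'; simp [shc]; ring
    rw [h1]
    have h2 := ((hp.inv (by positivity)).const_mul (-(c / 2))).deriv
    simp only [Pi.inv_apply] at h2
    rw [h2]
    simp [Real.cosh_zero]
    field_simp
  · have hEq : (fun y' => -(c / (2 * y' ^ 2)) * shc (z / y' ^ 2))
        =ᶠ[nhds y] fun y' => -(c / (2 * z)) * Real.sinh (z / y' ^ 2) := by
      filter_upwards [eventually_ne_nhds hy0] with y' hy'
      have hy2 : y' ^ 2 ≠ 0 := pow_ne_zero _ hy'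
      have hz' : z / y' ^ 2 ≠ 0 := div_ne_zero hz hy2
      simp only [shc, if_neg hz']
      field_simp
    rw [hEq.deriv_eq]
    have hu : HasDerivAt (fun y' : ℝ => z / y' ^ 2) (-(2 * z) / y ^ 3) y := by
      have h3 := (hp.inv (by positivity)).const_mul z
      have h4 : (fun y' : ℝ => z * (y' ^ 2)⁻¹) = fun y' => z / y' ^ 2 := by
        funext y'; rw [div_eq_mul_inv]
      simp only [Pi.inv_apply] at h3
      rw [h4] at h3
      refine h3.congr_deriv ?_
      rw [eq_comm, div_eq_iff (by positivity)]
      field_simp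
    have h5 := (hu.sinh.const_mul (-(c / (2 * z)))).deriv
    rw [h5]
    field_simp

theorem sl2_classI5_deformed_hamiltonian_vector_fields (z : ℝ) :
    ∀ x y : ℝ, 0 < y →
      -- X_{z,1} = ∂ₓ and h_{z,1} = -1/(2y²)
      (deriv (fun x' => -(1 / (2 * y ^ 2))) x = -(0 : ℝ) / y ^ 3 ∧
       deriv (fun y' : ℝ => -(1 / (2 * y' ^ 2))) y = 1 / y ^ 3) ∧
      -- X_{z,2} = x cosh(z/y²)∂ₓ + (y/2) shc(z/y²)∂_y,  h_{z,2} = -(x/(2y²)) shc(z/y²)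
      (deriv (fun x' => -(x' / (2 * y ^ 2)) * shc (z / y ^ 2)) x
         = -(y / 2 * shc (z / y ^ 2)) / y ^ 3 ∧
       deriv (fun y' => -(x / (2 * y' ^ 2)) * shc (z / y' ^ 2)) y
         = x * Real.cosh (z / y ^ 2) / y ^ 3) ∧
      -- X_{z,3} = x² cosh(z/y²)∂ₓ + x y shc(z/y²)∂_y,  h_{z,3} = -(x²/(2y²)) shc(z/y²)
      (deriv (fun x' => -(x' ^ 2 / (2 * y ^ 2)) * shc (z / y ^ 2)) x
         = -(x * y * shc (z / y ^ 2)) / y ^ 3 ∧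
       deriv (fun y' => -(x ^ 2 / (2 * y' ^ 2)) * shc (z / y' ^ 2)) y
         = x ^ 2 * Real.cosh (z / y ^ 2) / y ^ 3) := by
  intro x y hy
  have hy0 : y ≠ 0 := hy.ne'
  refine ⟨⟨by simp, ?_⟩, ⟨?_, ?_⟩, ⟨?_, ?_⟩⟩
  · have h1 : (fun y' : ℝ => -(1 / (2 * y' ^ 2)))
        = fun y' => -(1 / (2 * y' ^ 2)) * shc (0 / y' ^ 2) := by
      funext y'; simp [shc]
    rw [h1, shc_key_deriv 0 1 hy]
    simp
  · have h1 : (fun x' => -(x' / (2 * y ^ 2)) * shc (z / y ^ 2))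
        = fun x' => (-(shc (z / y ^ 2) / (2 * y ^ 2))) * x' := by
      funext x'; ring
    rw [h1, ((hasDerivAt_id' (x := x)).const_mul (-(shc (z / y ^ 2) / (2 * y ^ 2)))).deriv]
    field_simp
  · exact shc_key_deriv z x hy
  · have h1 : (fun x' => -(x' ^ 2 / (2 * y ^ 2)) * shc (z / y ^ 2))
        = fun x' => (-(shc (z / y ^ 2) / (2 * y ^ 2))) * x' ^ 2 := by
      funext x'; ring
    have h2 : HasDerivAt (fun x' : ℝ => x' ^ 2) (2 * x) x := by
      simpa using hasDerivAt_pow 2 x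
    rw [h1, (h2.const_mul _).deriv]
    field_simp
  · exact shc_key_deriv z (x ^ 2) hy
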